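/- arXiv:2009.04053 — 2 statements merged into one kernel-verified Lean document; each statement's English description precedes it below -/
import Mathlib

section
/- Let n ≥ 2 and let E_1, …, E_n be real normed vector spaces. For each l = 1, …, n−1 let f_l : E_l → E_{l+1} be Lipschitz continuous with constant H_l ≥ 0, and let R : E_n → ℝ be Lipschitz continuous with constant H_n ≥ 0. Given points p_l ∈ E_l for l = 1, …, n, define the relaxation residuals r_l = p_{l+1} − f_l(p_l) ∈ E_{l+1} for l = 1, …, n−1. Then the approximation error satisfies |R(f_{n−1}(f_{n−2}(⋯f_1(p_1)⋯))) − R(p_n)| ≤ H_n · Σ_{l=1}^{n−1} ( ‖r_l‖ · Π_{j=l+1}^{n−1} H_j ). -/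
/-- Forward propagation through the composed subnetworks:
`fwd f x l = f_{l-1} (f_{l-2} (⋯ f_0 (x) ⋯))`. -/
def fwd {E : ℕ → Type*} (f : ∀ l, E l → E (l + 1)) (x : E 0) : (l : ℕ) → E l
  | 0 => x
  | k + 1 => f k (fwd f x k)

lemma fwd_error {E : ℕ → Type*} [∀ i, NormedAddCommGroup (E i)]
    (f : ∀ l, E l → E (l + 1)) (H : ℕ → ℝ) (hH : ∀ l, 0 ≤ H l) (p : ∀ l, E l) :
    ∀ m, (∀ l, l < m → ∀ x y : E l, ‖f l x - f l y‖ ≤ H l * ‖x - y‖) →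
      ‖fwd f (p 0) m - p m‖ ≤ ∑ l ∈ Finset.range m,
        ‖p (l + 1) - f l (p l)‖ * ∏ j ∈ Finset.Ico (l + 1) m, H j := by
  intro m
  induction m with
  | zero => intro _; simp [fwd]
  | succ m ih =>
    intro hf
    have ih' := ih (fun l hl => hf l (Nat.lt_succ_of_lt hl))
    have h1 : ‖fwd f (p 0) (m + 1) - p (m + 1)‖ ≤
        H m * ‖fwd f (p 0) m - p m‖ + ‖p (m + 1) - f m (p m)‖ := by
      have : fwd f (p 0) (m + 1) - p (m + 1) =
          (f m (fwd f (p 0) m) - f m (p m)) - (p (m + 1) - f m (p m)) := by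
        simp [fwd]
      rw [this]
      refine (norm_sub_le _ _).trans ?_
      exact add_le_add (hf m (Nat.lt_succ_self m) _ _) le_rfl
    refine h1.trans ?_
    rw [Finset.sum_range_succ]
    have heq : ∀ l ∈ Finset.range m,
        ‖p (l + 1) - f l (p l)‖ * ∏ j ∈ Finset.Ico (l + 1) (m + 1), H j =
        (‖p (l + 1) - f l (p l)‖ * ∏ j ∈ Finset.Ico (l + 1) m, H j) * H m := by
      intro l hl
      rw [Finset.prod_Ico_succ_top (Nat.succ_le_of_lt (Finset.mem_range.mp hl)), mul_assoc]
    rw [Finset.sum_congr rfl heq, ← Finset.sum_mul]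
    simp only [Finset.Ico_self, Finset.prod_empty, mul_one]
    have := mul_le_mul_of_nonneg_right ih' (hH m)
    nlinarith [this, hH m]

/-- **Theorem 1 (Approximation Error).**  A network is split into `n ≥ 2` subnetworks
`f l : E l → E (l+1)` (for `l = 0, …, n-2`), each Lipschitz with constant `H l ≥ 0`,
and the loss `R : E (n-1) → ℝ` is Lipschitz with constant `Hn ≥ 0`.  Given points
`p l ∈ E l`, with residuals `r l = p (l+1) - f l (p l)`, the approximation error
`|R (f_{n-2}(⋯ f_0 (p 0) ⋯)) - R (p (n-1))|` is bounded by
`Hn * ∑_{l=0}^{n-2} ‖r l‖ * ∏_{j=l+1}^{n-2} H j` (the empty product being `1`). -/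
theorem approximation_error (n : ℕ) (hn : 2 ≤ n)
    (E : ℕ → Type*) [∀ i, NormedAddCommGroup (E i)] [∀ i, NormedSpace ℝ (E i)]
    (f : ∀ l, E l → E (l + 1)) (R : E (n - 1) → ℝ)
    (H : ℕ → ℝ) (hH : ∀ l, 0 ≤ H l)
    (hf : ∀ l, l < n - 1 → ∀ x y : E l, ‖f l x - f l y‖ ≤ H l * ‖x - y‖)
    (Hn : ℝ) (hHn : 0 ≤ Hn)
    (hR : ∀ x y : E (n - 1), |R x - R y| ≤ Hn * ‖x - y‖)
    (p : ∀ l, E l) :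
    |R (fwd f (p 0) (n - 1)) - R (p (n - 1))| ≤
      Hn * ∑ l ∈ Finset.range (n - 1),
        ‖p (l + 1) - f l (p l)‖ * ∏ j ∈ Finset.Ico (l + 1) (n - 1), H j := by
  refine (hR _ _).trans (mul_le_mul_of_nonneg_left ?_ hHn)
  exact fwd_error f H hH p (n - 1) hf
end

section
/- Let n ≥ 2 and let E_1, …, E_n be real normed vector spaces. For each l = 1, …, n−1 let f_l : E_l → E_{l+1} be Lipschitz continuous with constant H_l ≥ 0. Given points p_l ∈ E_l for l = 1, …, n, define r_l = p_{l+1} − f_l(p_l) for l = 1, …, n−1. Then ‖f_{n−1}(f_{n−2}(⋯f_1(p_1)⋯)) − p_n‖ ≤ Σ_{l=1}^{n−1} ( ‖r_l‖ · Π_{j=l+1}^{n−1} H_j ). -/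
theorem forward_residual_bound_aux (m : ℕ)
    (E : ℕ → Type*) [∀ i, NormedAddCommGroup (E i)]
    (f : ∀ l, E l → E (l + 1))
    (H : ℕ → ℝ) (hH : ∀ l, 0 ≤ H l)
    (hf : ∀ l, l < m → ∀ x y : E l, ‖f l x - f l y‖ ≤ H l * ‖x - y‖)
    (p : ∀ l, E l) :
    ‖fwd f (p 0) m - p m‖ ≤
      ∑ l ∈ Finset.range m,
        ‖p (l + 1) - f l (p l)‖ * ∏ j ∈ Finset.Ico (l + 1) m, H j := by
  induction m with
  | zero => simp [fwd]
  | succ k ih =>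
    have key : ‖fwd f (p 0) (k+1) - p (k+1)‖ ≤
        H k * ‖fwd f (p 0) k - p k‖ + ‖p (k+1) - f k (p k)‖ := by
      have h1 : fwd f (p 0) (k+1) - p (k+1)
          = (f k (fwd f (p 0) k) - f k (p k)) - (p (k+1) - f k (p k)) := by
        simp only [fwd]; abel
      rw [h1]
      refine (norm_sub_le _ _).trans ?_
      exact add_le_add_left (hf k (Nat.lt_succ_self k) _ _) _
    have ih' := ih (fun l hl => hf l (hl.trans (Nat.lt_succ_self k)))
    have hsum : ∑ l ∈ Finset.range (k+1),
        ‖p (l + 1) - f l (p l)‖ * ∏ j ∈ Finset.Ico (l + 1) (k+1), H j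
        = H k * (∑ l ∈ Finset.range k,
            ‖p (l + 1) - f l (p l)‖ * ∏ j ∈ Finset.Ico (l + 1) k, H j)
          + ‖p (k + 1) - f k (p k)‖ := by
      rw [Finset.sum_range_succ, Finset.mul_sum]
      congr 1
      · refine Finset.sum_congr rfl fun l hl => ?_
        have hl' : l + 1 ≤ k := Finset.mem_range.mp hl
        rw [Finset.prod_Ico_succ_top hl']
        ring
      · simp
    rw [hsum]
    calc ‖fwd f (p 0) (k+1) - p (k+1)‖
        ≤ H k * ‖fwd f (p 0) k - p k‖ + ‖p (k+1) - f k (p k)‖ := key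
      _ ≤ H k * (∑ l ∈ Finset.range k,
            ‖p (l + 1) - f l (p l)‖ * ∏ j ∈ Finset.Ico (l + 1) k, H j)
          + ‖p (k + 1) - f k (p k)‖ :=
        add_le_add_left (mul_le_mul_of_nonneg_left ih' (hH k)) _

/-- The key recursive inequality in the proof of Theorem 1: with `n ≥ 2`
subnetworks `f l : E l → E (l+1)` (for `l = 0, …, n-2`), each Lipschitz with
constant `H l ≥ 0`, points `p l ∈ E l`, and residuals `r l = p (l+1) - f l (p l)`,
one has `‖f_{n-2}(⋯ f_0 (p 0) ⋯) - p (n-1)‖ ≤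
∑_{l=0}^{n-2} ‖r l‖ * ∏_{j=l+1}^{n-2} H j` (the empty product being `1`). -/
theorem forward_residual_bound (n : ℕ) (hn : 2 ≤ n)
    (E : ℕ → Type*) [∀ i, NormedAddCommGroup (E i)] [∀ i, NormedSpace ℝ (E i)]
    (f : ∀ l, E l → E (l + 1))
    (H : ℕ → ℝ) (hH : ∀ l, 0 ≤ H l)
    (hf : ∀ l, l < n - 1 → ∀ x y : E l, ‖f l x - f l y‖ ≤ H l * ‖x - y‖)
    (p : ∀ l, E l) :
    ‖fwd f (p 0) (n - 1) - p (n - 1)‖ ≤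
      ∑ l ∈ Finset.range (n - 1),
        ‖p (l + 1) - f l (p l)‖ * ∏ j ∈ Finset.Ico (l + 1) (n - 1), H j := by
  exact forward_residual_bound_aux (n - 1) E f H hH hf p
end
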